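/- Let n, m ≥ 1 and let G = K_{n,m} be the complete bipartite graph on [n+m] with parts [n] and {n+1,…,n+m}, so that I(G) = (x_1,…,x_n)(x_{n+1},…,x_{n+m}) ⊆ K[x_1,…,x_{n+m}]. Then the ordering 1,2,…,n+m is a perfect elimination order of G^c and, for every k ≥ 0, the k-th homological shift ideal HS_k(I(G)) equals the monomial ideal generated by all squarefree monomials of degree k+2 in x_1,…,x_{n+m} that are divisible by x_i x_j for some i ∈ [n] and some j ∈ {n+1,…,n+m}; moreover HS_k(I(G)) has linear quotients with respect to the lexicographic order induced by any ordering of the variables. -/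

import Mathlib

open MvPolynomial

/-- An ideal of `K[x_1,…,x_n]` is *generated by variables* if it is the span of the
image of a subset of the variables. -/
def genByVars {K : Type*} [Field K] {n : ℕ} (I : Ideal (MvPolynomial (Fin n) K)) : Prop :=
  ∃ T : Set (Fin n), I = Ideal.span (MvPolynomial.X '' T)
/-- The natural ordering `1, 2, …, n` of the vertices is a perfect elimination order of
`H`: for each vertex, its neighbourhood among the later vertices is a clique. -/
def natPEO {n : ℕ} (H : SimpleGraph (Fin n)) : Prop :=
  ∀ i j k : Fin n, i < j → i < k → j ≠ k → H.Adj i j → H.Adj i k → H.Adj j k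

/-- The reversed ordering `n, n-1, …, 1` of the vertices is a perfect elimination order of
`H`: for each vertex, its neighbourhood among the earlier-labelled vertices is a clique. -/
def revPEO {n : ℕ} (H : SimpleGraph (Fin n)) : Prop :=
  ∀ i j k : Fin n, j < i → k < i → j ≠ k → H.Adj i j → H.Adj i k → H.Adj j k
/-- The generating monomials of the `k`-th homological shift ideal `HS_k(I(G))`:
all monomials `x_A x_B` with `A, B` nonempty, `max A < min B`, `|A ∪ B| = k + 2` and
`{max A, b} ∈ E(G)` for all `b ∈ B`. -/
def HSgens (K : Type*) [Field K] {n : ℕ} (G : SimpleGraph (Fin n)) (k : ℕ) :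
    Set (MvPolynomial (Fin n) K) :=
  {w | ∃ A B : Finset (Fin n), A.Nonempty ∧ B.Nonempty ∧
    (∀ a ∈ A, ∀ b ∈ B, a < b) ∧ (A ∪ B).card = k + 2 ∧
    (∃ a0 ∈ A, (∀ a ∈ A, a ≤ a0) ∧ ∀ b ∈ B, G.Adj a0 b) ∧
    w = (∏ i ∈ A, MvPolynomial.X i) * ∏ i ∈ B, MvPolynomial.X i}
/-- The supports of the generating monomials of `HS_k(I(G))`: sets `C = A ∪ B` with
`A, B` nonempty, `max A < min B`, `|C| = k + 2` and `{max A, b} ∈ E(G)` for all `b ∈ B`;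
the corresponding generator of `HS_k(I(G))` is the squarefree monomial `x_C = x_A x_B`. -/
def HSsets {n : ℕ} (G : SimpleGraph (Fin n)) (k : ℕ) : Set (Finset (Fin n)) :=
  {C | ∃ A B : Finset (Fin n), A.Nonempty ∧ B.Nonempty ∧
    (∀ a ∈ A, ∀ b ∈ B, a < b) ∧ A ∪ B = C ∧ C.card = k + 2 ∧
    ∃ a0 ∈ A, (∀ a ∈ A, a ≤ a0) ∧ ∀ b ∈ B, G.Adj a0 b}
/-- For squarefree monomials `x_C`, `x_D` of the same degree, `x_C >_lex x_D` in the
lexicographic order induced by the ordering `x_{σ 0} > x_{σ 1} > ⋯ > x_{σ (n-1)}` of the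
variables iff at the first variable (in this ordering) where the supports differ, that
variable lies in `C`. -/
def lexGtPerm {n : ℕ} (σ : Equiv.Perm (Fin n)) (C D : Finset (Fin n)) : Prop :=
  ∃ a : Fin n, a ∈ C ∧ a ∉ D ∧ ∀ b : Fin n, σ.symm b < σ.symm a → (b ∈ C ↔ b ∈ D)
/-- The complete bipartite graph `K_{n,m}` on `Fin (n+m)`, with parts
`{0,…,n-1}` (corresponding to `[n] = {1,…,n}`) and `{n,…,n+m-1}` (corresponding to
`{n+1,…,n+m}`). -/
def bipartiteGraph (n m : ℕ) : SimpleGraph (Fin (n + m)) where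
  Adj i j := ((i : ℕ) < n ∧ n ≤ (j : ℕ)) ∨ ((j : ℕ) < n ∧ n ≤ (i : ℕ))
  symm := ⟨fun i j h => h.symm⟩
  loopless := ⟨fun i h => by rcases h with ⟨h1, h2⟩ | ⟨h1, h2⟩ <;> omega⟩
noncomputable section AuxHS

variable {K : Type*} [Field K] {N : ℕ}

def indF (C : Finset (Fin N)) : Fin N →₀ ℕ := ∑ i ∈ C, Finsupp.single i 1

lemma indF_apply (C : Finset (Fin N)) (j : Fin N) : indF C j = if j ∈ C then 1 else 0 := by
  classical
  simp only [indF, Finsupp.finset_sum_apply, Finsupp.single_apply]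
  exact Finset.sum_ite_eq' C j fun _ => 1

lemma prodX_eq (C : Finset (Fin N)) :
    (∏ i ∈ C, (X i : MvPolynomial (Fin N) K)) = monomial (indF C) 1 := by
  classical
  unfold indF
  induction C using Finset.induction with
  | empty => simp
  | @insert a s ha ih =>
      rw [Finset.prod_insert ha, ih, Finset.sum_insert ha,
        show (X a : MvPolynomial (Fin N) K) = monomial (Finsupp.single a 1) 1 by
          rw [← X_pow_eq_monomial, pow_one],
        monomial_mul, one_mul]

lemma mem_span_prodX_image {S : Set (Finset (Fin N))} {f : MvPolynomial (Fin N) K} :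
    f ∈ Ideal.span ((fun D => ∏ i ∈ D, (X i : MvPolynomial (Fin N) K)) '' S) ↔
      ∀ μ ∈ f.support, ∃ D ∈ S, indF D ≤ μ := by
  have h : ((fun D => ∏ i ∈ D, (X i : MvPolynomial (Fin N) K)) '' S)
      = (fun s => monomial s (1 : K)) '' (indF '' S) := by
    rw [Set.image_image]; exact Set.image_congr fun D _ => prodX_eq D
  rw [h, mem_ideal_span_monomial_image]
  constructor
  · intro h μ hμ; obtain ⟨si, ⟨D, hD, rfl⟩, hle⟩ := h μ hμ; exact ⟨D, hD, hle⟩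
  · intro h μ hμ; obtain ⟨D, hD, hle⟩ := h μ hμ; exact ⟨indF D, ⟨D, hD, rfl⟩, hle⟩

lemma indF_le_of_subset {D C : Finset (Fin N)} {t : Fin N} (h : D ⊆ insert t C) :
    indF D ≤ Finsupp.single t 1 + indF C := by
  classical
  rw [Finsupp.le_def]
  intro j
  rw [Finsupp.add_apply, Finsupp.single_apply, indF_apply, indF_apply]
  by_cases hj : j ∈ D
  · have := h hj
    rw [Finset.mem_insert] at this
    rcases this with rfl | hC
    · simp [hj]
    · simp [hj, hC]
  · simp [hj]

lemma mu_ne_zero {D C : Finset (Fin N)} {μ : Fin N →₀ ℕ} {d : Fin N}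
    (h : indF D ≤ μ + indF C) (hd : d ∈ D) (hdC : d ∉ C) : μ d ≠ 0 := by
  have h2 := Finsupp.le_def.mp h d
  rw [Finsupp.add_apply, indF_apply, indF_apply, if_pos hd, if_neg hdC] at h2
  omega

lemma hsgens_eq (K : Type*) [Field K] (G : SimpleGraph (Fin N)) (k : ℕ) :
    HSgens K G k = (fun C => ∏ i ∈ C, (X i : MvPolynomial (Fin N) K)) '' (HSsets G k) := by
  classical
  ext w
  constructor
  · rintro ⟨A, B, hA, hB, hlt, hcard, hmax, rfl⟩
    have hd : Disjoint A B := by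
      rw [Finset.disjoint_left]
      intro a haA haB
      exact absurd (hlt a haA a haB) (lt_irrefl a)
    exact ⟨A ∪ B, ⟨A, B, hA, hB, hlt, rfl, hcard, hmax⟩, Finset.prod_union hd⟩
  · rintro ⟨C, ⟨A, B, hA, hB, hlt, rfl, hcard, hmax⟩, rfl⟩
    have hd : Disjoint A B := by
      rw [Finset.disjoint_left]
      intro a haA haB
      exact absurd (hlt a haA a haB) (lt_irrefl a)
    exact ⟨A, B, hA, hB, hlt, hcard, hmax, Finset.prod_union hd⟩

lemma mem_HSsets_iff {n m k : ℕ} (C : Finset (Fin (n + m))) :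
    C ∈ HSsets (bipartiteGraph n m) k ↔
      C.card = k + 2 ∧ (∃ i ∈ C, (i : ℕ) < n) ∧ (∃ j ∈ C, n ≤ (j : ℕ)) := by
  classical
  constructor
  · rintro ⟨A, B, hA, hB, hlt, hun, hcard, a0, ha0A, hmax, hadj⟩
    obtain ⟨b, hb⟩ := hB
    have hadjb : ((a0 : ℕ) < n ∧ n ≤ (b : ℕ)) ∨ ((b : ℕ) < n ∧ n ≤ (a0 : ℕ)) := hadj b hb
    have hab : (a0 : ℕ) < (b : ℕ) := hlt a0 ha0A b hb
    refine ⟨hcard, ⟨a0, ?_, by omega⟩, ⟨b, ?_, by omega⟩⟩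
    · rw [← hun]; exact Finset.mem_union_left _ ha0A
    · rw [← hun]; exact Finset.mem_union_right _ hb
  · rintro ⟨hcard, ⟨i, hiC, hi⟩, ⟨j, hjC, hj⟩⟩
    set A := C.filter (fun x : Fin (n + m) => (x : ℕ) < n) with hAdef
    set B := C.filter (fun x : Fin (n + m) => n ≤ (x : ℕ)) with hBdef
    have hiA : i ∈ A := by simp [hAdef, Finset.mem_filter, hiC, hi]
    have hjB : j ∈ B := by simp [hBdef, Finset.mem_filter, hjC, hj]
    refine ⟨A, B, ⟨i, hiA⟩, ⟨j, hjB⟩, ?_, ?_, hcard,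
      A.max' ⟨i, hiA⟩, A.max'_mem _, fun a ha => A.le_max' a ha, ?_⟩
    · intro a ha b hb
      have h1 : (a : ℕ) < n := (Finset.mem_filter.mp ha).2
      have h2 : n ≤ (b : ℕ) := (Finset.mem_filter.mp hb).2
      exact Fin.lt_def.mpr (by omega)
    · ext x
      simp only [hAdef, hBdef, Finset.mem_union, Finset.mem_filter]
      constructor
      · rintro (⟨h, _⟩ | ⟨h, _⟩) <;> exact h
      · intro h
        by_cases hx : (x : ℕ) < n
        · exact Or.inl ⟨h, hx⟩
        · exact Or.inr ⟨h, by omega⟩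
    · intro b hb
      have h1 : ((A.max' ⟨i, hiA⟩ : Fin (n + m)) : ℕ) < n :=
        (Finset.mem_filter.mp (A.max'_mem ⟨i, hiA⟩)).2
      have h2 : n ≤ (b : ℕ) := (Finset.mem_filter.mp hb).2
      exact Or.inl ⟨h1, h2⟩

end AuxHS

lemma key_lemma {n m k : ℕ} {σ : Equiv.Perm (Fin (n + m))}
    {C D : Finset (Fin (n + m))} {μ : Fin (n + m) →₀ ℕ}
    (hC : C ∈ HSsets (bipartiteGraph n m) k) (hD : D ∈ HSsets (bipartiteGraph n m) k)
    (hlex : lexGtPerm σ D C) (hle : indF D ≤ μ + indF C) :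
    ∃ t, μ t ≠ 0 ∧ t ∉ C ∧ ∃ D', (D' ∈ HSsets (bipartiteGraph n m) k ∧ lexGtPerm σ D' C) ∧
      D' ⊆ insert t C := by
  classical
  rw [mem_HSsets_iff] at hC hD
  obtain ⟨hCcard, ⟨iC, hiC, hiCn⟩, ⟨jC, hjC, hjCn⟩⟩ := hC
  obtain ⟨hDcard, ⟨iD, hiD, hiDn⟩, ⟨jD, hjD, hjDn⟩⟩ := hD
  obtain ⟨a, haD, haC, hagree⟩ := hlex
  refine ⟨a, mu_ne_zero hle haD haC, haC, ?_⟩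
  have hCD : (C \ D).Nonempty := by
    by_contra h
    rw [Finset.not_nonempty_iff_eq_empty, Finset.sdiff_eq_empty_iff_subset] at h
    have hEq : C = D := Finset.eq_of_subset_of_card_le h (by omega)
    exact haC (hEq ▸ haD)
  have hslater : ∀ s ∈ C \ D, σ.symm a < σ.symm s := by
    intro s hs
    obtain ⟨hsC, hsD⟩ := Finset.mem_sdiff.mp hs
    rcases lt_trichotomy (σ.symm s) (σ.symm a) with h | h | h
    · exact absurd ((hagree s h).mpr hsC) hsD
    · exact absurd ((σ.symm.injective h) ▸ hsC) haC
    · exact h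
  have build : ∀ s ∈ C, σ.symm a < σ.symm s →
      (∃ i ∈ (insert a C).erase s, (i : ℕ) < n) →
      (∃ j ∈ (insert a C).erase s, n ≤ (j : ℕ)) →
      ∃ D', (D' ∈ HSsets (bipartiteGraph n m) k ∧ lexGtPerm σ D' C) ∧ D' ⊆ insert a C := by
    intro s hsC hslt hpart1 hpart2
    refine ⟨(insert a C).erase s, ⟨?_, ?_⟩, Finset.erase_subset _ _⟩
    · rw [mem_HSsets_iff]
      refine ⟨?_, hpart1, hpart2⟩
      rw [Finset.card_erase_of_mem (Finset.mem_insert_of_mem hsC),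
        Finset.card_insert_of_notMem haC, hCcard]
      omega
    · refine ⟨a, Finset.mem_erase.mpr ⟨fun h => haC (h ▸ hsC), Finset.mem_insert_self a C⟩,
        haC, ?_⟩
      intro b hb
      have hba : b ≠ a := fun h => absurd hb (by rw [h]; exact lt_irrefl _)
      have hbs : b ≠ s := fun h => absurd hb (by rw [h]; exact not_lt.mpr (le_of_lt hslt))
      simp [Finset.mem_erase, Finset.mem_insert, hba, hbs]
  have hane : ∀ x : Fin (n + m), (x : ℕ) < n → ∀ y : Fin (n + m), n ≤ (y : ℕ) → x ≠ y := by
    intro x hx y hy h; rw [h] at hx; omega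
  by_cases ha : (a : ℕ) < n
  · -- a is in the left part; D' contains a, need an element ≥ n
    by_cases H : ∃ s ∈ C \ D, ∃ j ∈ insert a C, n ≤ (j : ℕ) ∧ j ≠ s
    · obtain ⟨s, hs, j, hj, hjn, hjs⟩ := H
      have hsC := (Finset.mem_sdiff.mp hs).1
      refine build s hsC (hslater s hs) ?_ ?_
      · exact ⟨a, Finset.mem_erase.mpr ⟨fun h => haC (h ▸ hsC), Finset.mem_insert_self a C⟩, ha⟩
      · exact ⟨j, Finset.mem_erase.mpr ⟨hjs, hj⟩, hjn⟩
    · exfalso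
      push_neg at H
      have hsub : C \ D ⊆ {jC} := by
        intro s hs
        rw [Finset.mem_singleton]
        exact (H s hs jC (Finset.mem_insert_of_mem hjC) hjCn).symm
      have h1 : (C \ D).card ≤ 1 := le_trans (Finset.card_le_card hsub) (by simp)
      have hjDC : jD ∉ C := by
        intro hjDC2
        obtain ⟨s, hs⟩ := hCD
        have hEq := H s hs jD (Finset.mem_insert_of_mem hjDC2) hjDn
        exact (Finset.mem_sdiff.mp hs).2 (hEq ▸ hjD)
      have h2 : ({a, jD} : Finset (Fin (n + m))) ⊆ D \ C := by
        intro x hx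
        rw [Finset.mem_insert, Finset.mem_singleton] at hx
        rcases hx with rfl | rfl
        · exact Finset.mem_sdiff.mpr ⟨haD, haC⟩
        · exact Finset.mem_sdiff.mpr ⟨hjD, hjDC⟩
      have h3 : 2 ≤ (D \ C).card := by
        calc 2 = ({a, jD} : Finset (Fin (n + m))).card :=
              (Finset.card_pair (hane a ha jD hjDn)).symm
          _ ≤ _ := Finset.card_le_card h2
      have h4 : (D \ C).card = (C \ D).card := Finset.card_sdiff_comm (by omega)
      omega
  · -- a is in the right part; D' contains a, need an element < n
    have ha' : n ≤ (a : ℕ) := not_lt.mp ha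
    by_cases H : ∃ s ∈ C \ D, ∃ i ∈ insert a C, (i : ℕ) < n ∧ i ≠ s
    · obtain ⟨s, hs, i, hi, hin, his⟩ := H
      have hsC := (Finset.mem_sdiff.mp hs).1
      refine build s hsC (hslater s hs) ?_ ?_
      · exact ⟨i, Finset.mem_erase.mpr ⟨his, hi⟩, hin⟩
      · exact ⟨a, Finset.mem_erase.mpr ⟨fun h => haC (h ▸ hsC), Finset.mem_insert_self a C⟩, ha'⟩
    · exfalso
      push_neg at H
      have hsub : C \ D ⊆ {iC} := by
        intro s hs
        rw [Finset.mem_singleton]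
        exact (H s hs iC (Finset.mem_insert_of_mem hiC) hiCn).symm
      have h1 : (C \ D).card ≤ 1 := le_trans (Finset.card_le_card hsub) (by simp)
      have hiDC : iD ∉ C := by
        intro hiDC2
        obtain ⟨s, hs⟩ := hCD
        have hEq := H s hs iD (Finset.mem_insert_of_mem hiDC2) hiDn
        exact (Finset.mem_sdiff.mp hs).2 (hEq ▸ hiD)
      have h2 : ({a, iD} : Finset (Fin (n + m))) ⊆ D \ C := by
        intro x hx
        rw [Finset.mem_insert, Finset.mem_singleton] at hx
        rcases hx with rfl | rfl
        · exact Finset.mem_sdiff.mpr ⟨haD, haC⟩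
        · exact Finset.mem_sdiff.mpr ⟨hiD, hiDC⟩
      have h3 : 2 ≤ (D \ C).card := by
        calc 2 = ({a, iD} : Finset (Fin (n + m))).card :=
              (Finset.card_pair (Ne.symm (hane iD hiDn a ha'))).symm
          _ ≤ _ := Finset.card_le_card h2
      have h4 : (D \ C).card = (C \ D).card := Finset.card_sdiff_comm (by omega)
      omega

/-- **Example 2.8(a) (Ficarra–Herzog).**  Let `G = K_{n,m}` be the complete bipartite
graph with parts `[n]` and `{n+1,…,n+m}` (`n, m ≥ 1`).  Then the natural order is a
perfect elimination order of `Gᶜ`; for every `k ≥ 0`, `HS_k(I(G))` is generated by all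
squarefree monomials of degree `k+2` divisible by `x_i x_j` for some `i ∈ [n]` and
`j ∈ {n+1,…,n+m}`; and `HS_k(I(G))` has linear quotients with respect to the
lexicographic order induced by any ordering of the variables. -/
theorem HS_k_complete_bipartite
    {K : Type*} [Field K] (n m : ℕ) (hn : 1 ≤ n) (hm : 1 ≤ m) :
    natPEO (bipartiteGraph n m)ᶜ ∧
    (∀ k : ℕ, Ideal.span (HSgens K (bipartiteGraph n m) k) =
      Ideal.span {w : MvPolynomial (Fin (n + m)) K | ∃ C : Finset (Fin (n + m)),
        C.card = k + 2 ∧ (∃ i ∈ C, (i : ℕ) < n) ∧ (∃ j ∈ C, n ≤ (j : ℕ)) ∧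
        w = ∏ i ∈ C, MvPolynomial.X i}) ∧
    ∀ k : ℕ, ∀ σ : Equiv.Perm (Fin (n + m)), ∀ C ∈ HSsets (bipartiteGraph n m) k,
      genByVars ((Ideal.span
          ((fun D : Finset (Fin (n + m)) =>
            ∏ i ∈ D, (MvPolynomial.X i : MvPolynomial (Fin (n + m)) K)) ''
            {D | D ∈ HSsets (bipartiteGraph n m) k ∧ lexGtPerm σ D C})).colon
        ((Ideal.span {∏ i ∈ C, MvPolynomial.X i} : Ideal (MvPolynomial (Fin (n + m)) K)) :
          Set (MvPolynomial (Fin (n + m)) K))) := by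
  classical
  refine ⟨?_, ?_, ?_⟩
  · -- natPEO
    intro i j k hij hik hjk hadjij hadjik
    rw [SimpleGraph.compl_adj] at hadjij hadjik ⊢
    obtain ⟨_, hnij⟩ := hadjij
    obtain ⟨_, hnik⟩ := hadjik
    refine ⟨hjk, fun h => ?_⟩
    have h' : ((j : ℕ) < n ∧ n ≤ (k : ℕ)) ∨ ((k : ℕ) < n ∧ n ≤ (j : ℕ)) := h
    have h1 : ¬(((i : ℕ) < n ∧ n ≤ (j : ℕ)) ∨ ((j : ℕ) < n ∧ n ≤ (i : ℕ))) := hnij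
    have h2 : ¬(((i : ℕ) < n ∧ n ≤ (k : ℕ)) ∨ ((k : ℕ) < n ∧ n ≤ (i : ℕ))) := hnik
    omega
  · -- span equality
    intro k
    rw [hsgens_eq]
    congr 1
    ext w
    simp only [Set.mem_image, Set.mem_setOf_eq]
    constructor
    · rintro ⟨C, hC, rfl⟩
      rw [mem_HSsets_iff] at hC
      exact ⟨C, hC.1, hC.2.1, hC.2.2, rfl⟩
    · rintro ⟨C, h1, h2, h3, rfl⟩
      exact ⟨C, (mem_HSsets_iff C).mpr ⟨h1, h2, h3⟩, rfl⟩
  · -- linear quotients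
    intro k σ C hC
    refine ⟨{t | t ∉ C ∧ ∃ D ∈ {D | D ∈ HSsets (bipartiteGraph n m) k ∧ lexGtPerm σ D C},
      D ⊆ insert t C}, ?_⟩
    apply le_antisymm
    · intro f hf
      rw [Ideal.mem_colon_span_singleton, prodX_eq, mem_span_prodX_image] at hf
      rw [mem_ideal_span_X_image]
      intro μ hμ
      have hμ' : μ + indF C ∈ (f * monomial (indF C) (1 : K)).support := by
        rw [mem_support_iff, coeff_mul_monomial, mul_one]
        exact mem_support_iff.mp hμ
      obtain ⟨D, ⟨hD, hlex⟩, hle⟩ := hf (μ + indF C) hμ'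
      obtain ⟨t, ht0, htC, D', hD'S, hsub⟩ := key_lemma hC hD hlex hle
      exact ⟨t, ⟨htC, D', hD'S, hsub⟩, ht0⟩
    · rw [Ideal.span_le]
      rintro _ ⟨t, ⟨htC, D, hDS, hsub⟩, rfl⟩
      rw [SetLike.mem_coe, Ideal.mem_colon_span_singleton, mem_span_prodX_image]
      intro μ hμ
      have heq : (X t : MvPolynomial (Fin (n + m)) K) * ∏ i ∈ C, X i
          = monomial (Finsupp.single t 1 + indF C) 1 := by
        rw [prodX_eq, show (X t : MvPolynomial (Fin (n + m)) K)
          = monomial (Finsupp.single t 1) 1 by rw [← X_pow_eq_monomial, pow_one],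
          monomial_mul, one_mul]
      rw [heq, support_monomial, if_neg one_ne_zero, Finset.mem_singleton] at hμ
      subst hμ
      exact ⟨D, hDS, indF_le_of_subset hsub⟩
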